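/- Let p be prime, q = p^r, and let C be the q² × q² matrix over F_p indexed by pairs (i,j), 0 ≤ i,j < q, with entries c_{(i,j),(i,j)} = i + j, c_{(i+1,j),(i,j)} = i + 1, c_{(i,j+1),(i,j)} = j + 1 (all mod p), and zeros elsewhere. Then the rank of C is q² - q²/p. -/

import Mathlib

open Finset

section Aux

open Kronecker

/-- one-variable multiplication matrix -/
def Mm (p q : ℕ) : Matrix (Fin q) (Fin q) (ZMod p) :=
  fun i k => if i = k then ((i : ℕ) : ZMod p)
    else if (i : ℕ) = (k : ℕ) + 1 then (((k : ℕ) + 1 : ℕ) : ZMod p) else 0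

/-- matrix of eigenvectors -/
def Pm (p q : ℕ) : Matrix (Fin q) (Fin q) (ZMod p) :=
  fun i a => if (i : ℕ) / p = (a : ℕ) / p then
      (-1 : ZMod p) ^ (i : ℕ) * ((((i : ℕ) % p).choose ((a : ℕ) % p) : ℕ) : ZMod p)
    else 0

lemma nat_id (m s : ℕ) (hm : 1 ≤ m) :
    m * m.choose s = s * m.choose s + m * (m - 1).choose s := by
  rcases le_or_gt s m with hs | hs
  · have h := Nat.choose_mul_succ_eq (m - 1) s
    rw [Nat.sub_add_cancel hm] at h
    have h2 : s * m.choose s + (m - s) * m.choose s = m * m.choose s := by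
      rw [← add_mul]; congr 1; omega
    rw [mul_comm m ((m-1).choose s), h, mul_comm (m.choose s) (m - s)]
    omega
  · rw [Nat.choose_eq_zero_of_lt hs, Nat.choose_eq_zero_of_lt (by omega)]
    simp

lemma cast_eq_mod (p i : ℕ) : ((i : ℕ) : ZMod p) = ((i % p : ℕ) : ZMod p) :=
  (ZMod.natCast_mod i p).symm

lemma pred_div (p i : ℕ) (hp : 0 < p) (hm : i % p ≠ 0) : (i - 1) / p = i / p := by
  have hd := Nat.div_add_mod i p
  have hlt := Nat.mod_lt i hp
  have hsub : i % p - 1 < p := lt_of_le_of_lt (Nat.sub_le _ _) hlt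
  have h1 : i - 1 = p * (i / p) + (i % p - 1) := by omega
  rw [h1, Nat.mul_add_div hp, Nat.div_eq_of_lt hsub, add_zero]

lemma pred_mod (p i : ℕ) (hp : 0 < p) (hm : i % p ≠ 0) : (i - 1) % p = i % p - 1 := by
  have hd := Nat.div_add_mod i p
  have hlt := Nat.mod_lt i hp
  have hsub : i % p - 1 < p := lt_of_le_of_lt (Nat.sub_le _ _) hlt
  have h1 : i - 1 = p * (i / p) + (i % p - 1) := by omega
  rw [h1, Nat.mul_add_mod, Nat.mod_eq_of_lt hsub]

lemma eigen (p q : ℕ) (hp : 0 < p) :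
    Mm p q * Pm p q = Pm p q * Matrix.diagonal (fun a : Fin q => ((a : ℕ) : ZMod p)) := by
  ext i a
  rw [Matrix.mul_apply, Matrix.mul_diagonal]
  by_cases h0 : (i : ℕ) = 0
  · rw [Finset.sum_eq_zero]
    · by_cases hb : (i : ℕ) / p = (a : ℕ) / p
      · by_cases hs : (a : ℕ) % p = 0
        · have : ((a:ℕ) : ZMod p) = 0 := by rw [cast_eq_mod, hs]; simp
          rw [this, mul_zero]
        · simp only [Pm, if_pos hb, h0]
          have hc : ((0:ℕ) % p).choose ((a:ℕ) % p) = 0 :=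
            Nat.choose_eq_zero_of_lt (by rw [Nat.zero_mod]; omega)
          rw [hc]; simp
      · simp [Pm, hb]
    · intro k _
      simp only [Mm]
      rcases eq_or_ne i k with rfl | hik
      · rw [if_pos rfl, h0]; simp
      · rw [if_neg hik, if_neg (by omega), zero_mul]
  · -- i ≥ 1
    have h1 : 1 ≤ (i : ℕ) := by omega
    set i' : Fin q := ⟨(i : ℕ) - 1, by omega⟩ with hi'
    have hii' : i ≠ i' := by
      intro h; apply congrArg Fin.val at h; simp [hi'] at h; omega
    have hv : (i : ℕ) = (i' : ℕ) + 1 := by simp [hi']; omega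
    have hsum : ∀ k : Fin q, Mm p q i k * Pm p q k a
        = (if k = i then ((i:ℕ) : ZMod p) * Pm p q i a else 0)
          + (if k = i' then ((i:ℕ) : ZMod p) * Pm p q i' a else 0) := by
      intro k
      rcases eq_or_ne k i with rfl | hk1
      · rw [if_pos rfl, if_neg hii', add_zero]
        simp [Mm]
      · rcases eq_or_ne k i' with rfl | hk2
        · rw [if_neg hk1, if_pos rfl, zero_add]
          simp only [Mm, if_neg (Ne.symm hk1), if_pos hv]
          rw [← hv]
        · rw [if_neg hk1, if_neg hk2]
          simp only [Mm]
          rw [if_neg (Ne.symm hk1),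
            if_neg (by intro h; apply hk2; apply Fin.ext; simp [hi']; omega), zero_mul]
          simp
    rw [Finset.sum_congr rfl (fun k _ => hsum k), Finset.sum_add_distrib,
      Finset.sum_ite_eq' univ i, Finset.sum_ite_eq' univ i', if_pos (mem_univ i),
      if_pos (mem_univ i')]
    have hval : (i' : ℕ) = (i : ℕ) - 1 := rfl
    by_cases hb : (i : ℕ) / p = (a : ℕ) / p
    · by_cases hm : (i : ℕ) % p = 0
      · have hiz : ((i:ℕ) : ZMod p) = 0 := by rw [cast_eq_mod, hm]; simp
        rw [hiz, zero_mul, zero_mul, add_zero]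
        by_cases hs : (a : ℕ) % p = 0
        · have haz : ((a:ℕ) : ZMod p) = 0 := by rw [cast_eq_mod, hs]; simp
          rw [haz, mul_zero]
        · simp only [Pm, if_pos hb, hm]
          rw [Nat.choose_eq_zero_of_lt (by omega)]
          simp
      · -- interior case
        have hb' : (i' : ℕ) / p = (a : ℕ) / p := by
          rw [hval, pred_div p _ hp hm, hb]
        have hm' : (i' : ℕ) % p = (i:ℕ) % p - 1 := by
          rw [hval, pred_mod p _ hp hm]
        simp only [Pm, if_pos hb, if_pos hb', hm', hval]
        set m := (i:ℕ) % p with hmdef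
        set s := (a:ℕ) % p with hsdef
        have key : ((i:ℕ) : ZMod p) * ((m.choose s : ℕ) : ZMod p) =
            ((a:ℕ) : ZMod p) * ((m.choose s : ℕ) : ZMod p)
              + ((i:ℕ) : ZMod p) * (((m-1).choose s : ℕ) : ZMod p) := by
          rw [cast_eq_mod p (i:ℕ), cast_eq_mod p (a:ℕ), ← hmdef, ← hsdef]
          have := nat_id m s (by omega)
          exact_mod_cast congrArg (fun t : ℕ => (t : ZMod p)) this
        obtain ⟨j, hj⟩ : ∃ j, (i:ℕ) = j + 1 := ⟨(i:ℕ) - 1, by omega⟩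
        rw [hj] at key ⊢
        rw [Nat.add_sub_cancel, pow_succ]
        have hjj : (i':ℕ) = j := by omega
        rw [hjj] at hb' hm'
        rw [if_pos hb', hm']
        linear_combination (-(-1:ZMod p)^j) * key
    · -- different blocks
      rw [Pm]
      simp only [if_neg hb]
      rw [mul_zero, zero_mul, zero_add]
      by_cases hb' : (i' : ℕ) / p = (a : ℕ) / p
      · have hm : (i : ℕ) % p = 0 := by
          by_contra hm
          exact hb (by rw [← hb', hval, pred_div p _ hp hm])
        have hiz : ((i:ℕ) : ZMod p) = 0 := by rw [cast_eq_mod, hm]; simp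
        rw [hiz, zero_mul]
      · rw [Pm]
        simp only [if_neg hb']
        rw [mul_zero]

lemma Pm_tri (p q : ℕ) : (Pm p q).BlockTriangular OrderDual.toDual := by
  intro i a h
  have hia : (i : ℕ) < (a : ℕ) := h
  unfold Pm
  by_cases hb : (i : ℕ) / p = (a : ℕ) / p
  · rw [if_pos hb]
    have hdi : p * ((a:ℕ)/p) + (i:ℕ) % p = (i:ℕ) := by rw [← hb]; exact Nat.div_add_mod _ p
    have hda : p * ((a:ℕ)/p) + (a:ℕ) % p = (a:ℕ) := Nat.div_add_mod _ p
    have : (i:ℕ) % p < (a:ℕ) % p := by omega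
    rw [Nat.choose_eq_zero_of_lt this]
    simp
  · rw [if_neg hb]

lemma Pm_det (p q : ℕ) : IsUnit (Pm p q).det := by
  rw [Matrix.det_of_lowerTriangular _ (Pm_tri p q)]
  have : ∀ a : Fin q, Pm p q a a = (-1 : ZMod p) ^ (a : ℕ) := by
    intro a
    unfold Pm
    rw [if_pos rfl, Nat.choose_self]
    simp
  rw [Finset.prod_congr rfl (fun a _ => this a), Finset.prod_pow_eq_pow_sum]
  exact (isUnit_one.neg).pow _

lemma mod_compl {p a b : ℕ} (hp : 0 < p) (h : p ∣ (a + b)) :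
    b % p = (p - a % p) % p := by
  have hlt1 := Nat.mod_lt a hp
  have hlt2 := Nat.mod_lt b hp
  have hd : p ∣ (a % p + b % p) := by
    have h1 : (a % p + b % p) % p = 0 := by
      rw [← Nat.add_mod]
      exact Nat.dvd_iff_mod_eq_zero.mp h
    exact Nat.dvd_iff_mod_eq_zero.mpr h1
  obtain ⟨c, hc⟩ := hd
  have hc1 : c ≤ 1 := by
    by_contra hcg
    push_neg at hcg
    have : p * 2 ≤ p * c := Nat.mul_le_mul_left p hcg
    omega
  interval_cases c
  · have ha : a % p = 0 := by omega
    have hb : b % p = 0 := by omega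
    rw [ha, hb, Nat.sub_zero, Nat.mod_self]
  · have ha : 1 ≤ a % p := by omega
    rw [Nat.mod_eq_of_lt (by omega : p - a % p < p)]
    omega

lemma dvd_recomb (p : ℕ) (hp : 0 < p) (a k : ℕ) :
    p ∣ a + (p * k + (p - a % p) % p) := by
  have h1 := Nat.div_add_mod a p
  by_cases hz : a % p = 0
  · rw [hz, Nat.sub_zero, Nat.mod_self]
    refine ⟨a / p + k, ?_⟩
    rw [Nat.mul_add]
    omega
  · have hlt := Nat.mod_lt a hp
    rw [Nat.mod_eq_of_lt (by omega : p - a % p < p)]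
    refine ⟨a / p + k + 1, ?_⟩
    rw [Nat.mul_add, Nat.mul_add, Nat.mul_one]
    omega

lemma bnd (p q : ℕ) (hp : 0 < p) (hdvd : p ∣ q) (y1 : Fin q) (y2 : Fin (q / p)) :
    p * (y2 : ℕ) + (p - (y1 : ℕ) % p) % p < q := by
  obtain ⟨m, rfl⟩ := hdvd
  have h2 : (y2 : ℕ) < m :=
    lt_of_lt_of_le y2.isLt (le_of_eq (Nat.mul_div_cancel_left m hp))
  have hmod : (p - (y1 : ℕ) % p) % p < p := Nat.mod_lt _ hp
  have h3 : p * ((y2 : ℕ) + 1) ≤ p * m := Nat.mul_le_mul_left p (by omega)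
  rw [Nat.mul_add, Nat.mul_one] at h3
  omega

lemma count_zero (p q : ℕ) (hp : 0 < p) (hdvd : p ∣ q) :
    (univ.filter fun x : Fin q × Fin q =>
      ((x.1 : ℕ) : ZMod p) + ((x.2 : ℕ) : ZMod p) = 0).card = q * (q / p) := by
  haveI : NeZero p := ⟨by omega⟩
  have hcond : ∀ x : Fin q × Fin q,
      (((x.1 : ℕ) : ZMod p) + ((x.2 : ℕ) : ZMod p) = 0) ↔ p ∣ ((x.1 : ℕ) + (x.2 : ℕ)) := by
    intro x
    rw [← Nat.cast_add, ZMod.natCast_eq_zero_iff]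
  have : (univ : Finset (Fin q × Fin (q / p))).card = q * (q / p) := by
    simp [Finset.card_univ]
  rw [← this]
  apply Finset.card_nbij'
    (i := fun x : Fin q × Fin q =>
      ((x.1, ⟨(x.2 : ℕ) / p, Nat.div_lt_div_of_lt_of_dvd hdvd x.2.isLt⟩) : Fin q × Fin (q / p)))
    (j := fun y : Fin q × Fin (q / p) =>
      ((y.1, ⟨p * (y.2 : ℕ) + (p - (y.1 : ℕ) % p) % p, bnd p q hp hdvd y.1 y.2⟩) : Fin q × Fin q))
  · intro x _
    exact mem_univ _
  · intro y _
    rw [Finset.mem_coe, Finset.mem_filter]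
    refine ⟨mem_univ _, ?_⟩
    rw [hcond]
    exact dvd_recomb p hp _ _
  · intro x hx
    rw [Finset.mem_coe, Finset.mem_filter] at hx
    have hdv : p ∣ ((x.1 : ℕ) + (x.2 : ℕ)) := (hcond x).mp hx.2
    have hm := mod_compl hp hdv
    ext
    · rfl
    · show p * ((x.2 : ℕ) / p) + (p - (x.1 : ℕ) % p) % p = (x.2 : ℕ)
      rw [← hm]
      exact Nat.div_add_mod _ p
  · intro y _
    ext
    · rfl
    · show (p * (y.2 : ℕ) + (p - (y.1 : ℕ) % p) % p) / p = (y.2 : ℕ)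
      rw [Nat.mul_add_div hp, Nat.div_eq_of_lt (Nat.mod_lt _ hp), add_zero]

end Aux

/-- The matrix of multiplication by `x + y` on `Dist(T_1)` in the basis
`binom(x,i)binom(y,j)`, `0 ≤ i,j < q`. -/
def multMatrix (p r : ℕ) : Matrix (Fin (p ^ r) × Fin (p ^ r)) (Fin (p ^ r) × Fin (p ^ r)) (ZMod p) :=
  fun row col =>
    if row = col then ((row.1.1 : ℕ) + (row.2.1 : ℕ) : ZMod p)
    else if (row.1.1 : ℕ) = (col.1.1 : ℕ) + 1 ∧ row.2 = col.2 then ((col.1.1 : ℕ) + 1 : ZMod p)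
    else if (row.2.1 : ℕ) = (col.2.1 : ℕ) + 1 ∧ row.1 = col.1 then ((col.2.1 : ℕ) + 1 : ZMod p)
    else 0

section Decomp

open Kronecker

set_option linter.unreachableTactic false
set_option linter.unusedTactic false

lemma decomp (p r : ℕ) :
    multMatrix p r = Mm p (p^r) ⊗ₖ (1 : Matrix (Fin (p^r)) (Fin (p^r)) (ZMod p))
      + (1 : Matrix (Fin (p^r)) (Fin (p^r)) (ZMod p)) ⊗ₖ Mm p (p^r) := by
  ext ⟨i, j⟩ ⟨k, l⟩
  simp only [multMatrix, Mm, Matrix.add_apply, Matrix.kroneckerMap_apply, Matrix.one_apply,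
    Prod.mk.injEq, Fin.ext_iff]
  split_ifs
  all_goals
    first
    | (exfalso; omega)
    | (push_cast; ring)
    | ring
    | omega

lemma conj (p r : ℕ) (hp : 0 < p) :
    multMatrix p r * (Pm p (p^r) ⊗ₖ Pm p (p^r))
      = (Pm p (p^r) ⊗ₖ Pm p (p^r)) *
        Matrix.diagonal (fun x : Fin (p^r) × Fin (p^r) =>
          ((x.1 : ℕ) : ZMod p) + ((x.2 : ℕ) : ZMod p)) := by
  set q := p ^ r
  set P := Pm p q
  set D1 := Matrix.diagonal (fun a : Fin q => ((a : ℕ) : ZMod p)) with hD1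
  have k1 : (P * D1) ⊗ₖ P = (P ⊗ₖ P) * (D1 ⊗ₖ (1 : Matrix (Fin q) (Fin q) (ZMod p))) := by
    conv_rhs => rw [← Matrix.mul_kronecker_mul]
    rw [mul_one]
  have k2 : P ⊗ₖ (P * D1) = (P ⊗ₖ P) * ((1 : Matrix (Fin q) (Fin q) (ZMod p)) ⊗ₖ D1) := by
    conv_rhs => rw [← Matrix.mul_kronecker_mul]
    rw [mul_one]
  rw [decomp, add_mul, ← Matrix.mul_kronecker_mul, ← Matrix.mul_kronecker_mul,
    one_mul, eigen p q hp, k1, k2, ← Matrix.mul_add]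
  congr 1
  rw [hD1, ← Matrix.diagonal_one, Matrix.diagonal_kronecker_diagonal,
    Matrix.diagonal_kronecker_diagonal, Matrix.diagonal_add]
  congr 1
  funext x
  simp

end Decomp

open Kronecker in
theorem stmt_18 (p r : ℕ) (hp : p.Prime) (hr : 1 ≤ r) :
    (multMatrix p r).rank = p ^ r * p ^ r - (p ^ r * p ^ r) / p := by
  have hp0 : 0 < p := hp.pos
  haveI : Fact p.Prime := ⟨hp⟩
  set q := p ^ r with hq
  have hdvd : p ∣ q := by
    rw [hq]
    exact dvd_pow_self p (by omega)
  set Q := Pm p q ⊗ₖ Pm p q with hQ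
  have hQdet : IsUnit Q.det := by
    rw [hQ, Matrix.det_kronecker]
    exact ((Pm_det p q).pow _).mul ((Pm_det p q).pow _)
  have h1 : (multMatrix p r).rank = (multMatrix p r * Q).rank :=
    (Matrix.rank_mul_eq_left_of_isUnit_det Q (multMatrix p r) hQdet).symm
  rw [h1, conj p r hp0, Matrix.rank_mul_eq_right_of_isUnit_det Q _ hQdet,
    Matrix.rank_diagonal]
  rw [Fintype.card_subtype]
  have hsplit := Finset.card_filter_add_card_filter_not
    (s := (univ : Finset (Fin q × Fin q)))
    (p := fun x : Fin q × Fin q => ((x.1 : ℕ) : ZMod p) + ((x.2 : ℕ) : ZMod p) = 0)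
  have hcount := count_zero p q hp0 hdvd
  have hcard : (univ : Finset (Fin q × Fin q)).card = q * q := by
    simp [Finset.card_univ]
  have hdiv : q * q / p = q * (q / p) := Nat.mul_div_assoc q hdvd
  have : (univ.filter fun x : Fin q × Fin q =>
      ¬(((x.1 : ℕ) : ZMod p) + ((x.2 : ℕ) : ZMod p) = 0)).card = q * q - q * (q / p) := by
    omega
  rw [hdiv, ← this]
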